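/- If u₁ is rational and z = ((u₁ + i)/(u₁ − i))^(2^(k−1)) with z ≠ i, then u₂ = 2/(z − i) − i is a rational number, i.e., it lies in the image of ℚ in ℂ. -/

import Mathlib

open Complex

lemma pow_circle (n : ℕ) : ∀ a b : ℚ, a^2 + b^2 = 1 →
    ∃ c d : ℚ, c^2 + d^2 = 1 ∧ ((a : ℂ) + b * Complex.I)^n = (c : ℂ) + d * Complex.I := by
  induction n with
  | zero => intro a b h; exact ⟨1, 0, by norm_num, by norm_num⟩
  | succ n ih =>
    intro a b h
    obtain ⟨c, d, hcd, hpow⟩ := ih a b h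
    refine ⟨c*a - d*b, c*b + d*a, ?_, ?_⟩
    · nlinarith [hcd, h]
    · rw [pow_succ, hpow]
      push_cast
      have : Complex.I * Complex.I = -1 := Complex.I_mul_I
      ring_nf
      rw [Complex.I_sq]
      ring

theorem u2_is_rational (u₁ : ℚ) (h0 : u₁ ≠ 0) (k : ℕ) (hk : 1 ≤ k) (z : ℂ)
    (hz : z = (((u₁ : ℂ) + Complex.I) / ((u₁ : ℂ) - Complex.I)) ^ (2 ^ (k - 1)))
    (hzi : z ≠ Complex.I) :
    ∃ q : ℚ, 2 / (z - Complex.I) - Complex.I = (q : ℂ) := by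
  have hden : (u₁ : ℚ)^2 + 1 ≠ 0 := by positivity
  set a : ℚ := (u₁^2 - 1) / (u₁^2 + 1) with ha
  set b : ℚ := 2 * u₁ / (u₁^2 + 1) with hb
  have hab : a^2 + b^2 = 1 := by
    rw [ha, hb]
    field_simp [ha, hb]
    ring
  have hdC : ((u₁ : ℂ) - Complex.I) ≠ 0 := by
    intro h
    have := congrArg Complex.im h
    simp at this
  have hdenC : ((u₁ : ℂ)^2 + 1) ≠ 0 := by
    intro h
    have : ((u₁^2 + 1 : ℚ) : ℂ) = 0 := by push_cast; linear_combination h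
    exact hden (by exact_mod_cast this)
  have hw : ((u₁ : ℂ) + Complex.I) / ((u₁ : ℂ) - Complex.I) = (a : ℂ) + b * Complex.I := by
    rw [ha, hb]
    push_cast
    rw [div_eq_iff hdC]
    field_simp
    linear_combination 2*(u₁:ℂ) * Complex.I_sq
  obtain ⟨c, d, hcd, hpow⟩ := pow_circle (2 ^ (k - 1)) a b hab
  have hzcd : z = (c : ℂ) + d * Complex.I := by rw [hz, hw, hpow]
  have hd1 : d ≠ 1 := by
    intro hd
    have hc : c = 0 := by nlinarith [hcd]
    apply hzi
    rw [hzcd, hc, hd]; simp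
  refine ⟨c / (1 - d), ?_⟩
  have hne : z - Complex.I ≠ 0 := sub_ne_zero.mpr hzi
  have h1d : ((1 : ℂ) - d) ≠ 0 := by
    intro h
    apply hd1
    have : ((1 - d : ℚ) : ℂ) = 0 := by push_cast; linear_combination h
    have := (Rat.cast_eq_zero (α := ℂ)).mp this
    linarith [this]
  rw [sub_eq_iff_eq_add, div_eq_iff hne]
  push_cast
  rw [hzcd]
  field_simp
  have hcdC : (c:ℂ)^2 + (d:ℂ)^2 = 1 := by exact_mod_cast hcd
  linear_combination ((d:ℂ)^2 - 2*d + 1) * Complex.I_sq - hcdC
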